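/- Let g : (0,1) → (0,∞) be integrable, let h : (0,1) → (0,∞) be strictly increasing, and for d ≥ 0 define g_d(x) = g(x) exp(−d h(x)) and F_d(a) = ∫₀^a g_d(x) dx / ∫₀^1 g_d(x) dx. Then for every a ∈ (0,1) and every d > 0, F_d is strictly increasing in d; in particular F_d(a) > F_0(a) for all d > 0. -/

import Mathlib

open Set MeasureTheory

section Aux

variable {g h : ℝ → ℝ}

lemma gd_int (hg_pos : ∀ x ∈ Set.Ioo (0 : ℝ) 1, 0 < g x)
    (hg_int : IntegrableOn g (Set.Ioo (0 : ℝ) 1))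
    (hh_pos : ∀ x ∈ Set.Ioo (0 : ℝ) 1, 0 < h x)
    (hh_mono : StrictMonoOn h (Set.Ioo (0 : ℝ) 1))
    {d : ℝ} (hd : 0 ≤ d) :
    IntegrableOn (fun x => g x * Real.exp (-d * h x)) (Set.Ioo (0 : ℝ) 1) := by
  have hmeas : AEStronglyMeasurable (fun x => g x * Real.exp (-d * h x))
      (volume.restrict (Set.Ioo (0 : ℝ) 1)) := by
    have hh : AEMeasurable h (volume.restrict (Set.Ioo (0 : ℝ) 1)) :=
      aemeasurable_restrict_of_monotoneOn measurableSet_Ioo hh_mono.monotoneOn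
    exact hg_int.aestronglyMeasurable.mul
      ((Real.measurable_exp.comp_aemeasurable ((hh.const_mul (-d)))).aestronglyMeasurable)
  refine Integrable.mono hg_int hmeas ?_
  refine (ae_restrict_iff' measurableSet_Ioo).2 (Filter.Eventually.of_forall fun x hx => ?_)
  have hgx := hg_pos x hx
  have hhx := hh_pos x hx
  have he : Real.exp (-d * h x) ≤ 1 := by
    rw [Real.exp_le_one_iff]
    nlinarith
  rw [Real.norm_eq_abs, Real.norm_eq_abs, abs_of_pos hgx, abs_of_pos (by positivity)]
  nlinarith [Real.exp_pos (-d * h x)]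

lemma gd_pos (hg_pos : ∀ x ∈ Set.Ioo (0 : ℝ) 1, 0 < g x)
    (hg_int : IntegrableOn g (Set.Ioo (0 : ℝ) 1))
    (hh_pos : ∀ x ∈ Set.Ioo (0 : ℝ) 1, 0 < h x)
    (hh_mono : StrictMonoOn h (Set.Ioo (0 : ℝ) 1))
    {d u v : ℝ} (hd : 0 ≤ d) (huv : u < v) (hsub : Set.Ioo u v ⊆ Set.Ioo (0 : ℝ) 1) :
    0 < ∫ x in Set.Ioo u v, g x * Real.exp (-d * h x) := by
  have hint : IntegrableOn (fun x => g x * Real.exp (-d * h x)) (Set.Ioo u v) :=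
    (gd_int hg_pos hg_int hh_pos hh_mono hd).mono_set hsub
  have hnn : 0 ≤ᵐ[volume.restrict (Set.Ioo u v)] fun x => g x * Real.exp (-d * h x) := by
    refine (ae_restrict_iff' measurableSet_Ioo).2 (Filter.Eventually.of_forall fun x hx => ?_)
    have := hg_pos x (hsub hx)
    positivity
  rw [setIntegral_pos_iff_support_of_nonneg_ae hnn hint]
  have : Set.Ioo u v ⊆ Function.support (fun x => g x * Real.exp (-d * h x)) ∩ Set.Ioo u v := by
    intro x hx
    refine ⟨?_, hx⟩
    have := hg_pos x (hsub hx)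
    have := Real.exp_pos (-d * h x)
    simp only [Function.mem_support]
    positivity
  calc (0 : ENNReal) < volume (Set.Ioo u v) := by simp [huv]
    _ ≤ _ := measure_mono this

end Aux

/-- For a positive integrable `g` on `(0,1)` and a positive strictly increasing `h`, with
`g_d(x) = g(x) exp(−d h(x))` and `F_d(a) = ∫₀^a g_d / ∫₀^1 g_d`, the map `d ↦ F_d(a)` is
strictly increasing on `[0,∞)` for every `a ∈ (0,1)`; in particular `F_d(a) > F_0(a)` for
all `d > 0`. -/
theorem Fd_strictMono_in_d
    (g h : ℝ → ℝ)
    (hg_pos : ∀ x ∈ Set.Ioo (0 : ℝ) 1, 0 < g x)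
    (hg_int : IntegrableOn g (Set.Ioo (0 : ℝ) 1))
    (hh_pos : ∀ x ∈ Set.Ioo (0 : ℝ) 1, 0 < h x)
    (hh_mono : StrictMonoOn h (Set.Ioo (0 : ℝ) 1))
    (F : ℝ → ℝ → ℝ)
    (hF : ∀ d a, F d a =
      (∫ x in Set.Ioo (0 : ℝ) a, g x * Real.exp (-d * h x)) /
      (∫ x in Set.Ioo (0 : ℝ) 1, g x * Real.exp (-d * h x))) :
    ∀ a ∈ Set.Ioo (0 : ℝ) 1,
      StrictMonoOn (fun d => F d a) (Set.Ici (0 : ℝ)) ∧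
      ∀ d > (0 : ℝ), F 0 a < F d a := by
  intro a ha
  obtain ⟨ha0, ha1⟩ := ha
  have hsub1 : Set.Ioo (0 : ℝ) a ⊆ Set.Ioo (0 : ℝ) 1 :=
    Set.Ioo_subset_Ioo le_rfl ha1.le
  have hsub2 : Set.Ioo a (1 : ℝ) ⊆ Set.Ioo (0 : ℝ) 1 :=
    Set.Ioo_subset_Ioo ha0.le le_rfl
  -- abbreviations
  set A : ℝ → ℝ := fun d => ∫ x in Set.Ioo (0 : ℝ) a, g x * Real.exp (-d * h x) with hA
  set B : ℝ → ℝ := fun d => ∫ x in Set.Ioo a (1 : ℝ), g x * Real.exp (-d * h x) with hB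
  have hApos : ∀ d, 0 ≤ d → 0 < A d := fun d hd =>
    gd_pos hg_pos hg_int hh_pos hh_mono hd ha0 hsub1
  have hBpos : ∀ d, 0 ≤ d → 0 < B d := fun d hd =>
    gd_pos hg_pos hg_int hh_pos hh_mono hd ha1 hsub2
  -- splitting of integral over (0,1)
  have hsplit : ∀ d, 0 ≤ d →
      (∫ x in Set.Ioo (0 : ℝ) 1, g x * Real.exp (-d * h x)) = A d + B d := by
    intro d hd
    have hint := gd_int hg_pos hg_int hh_pos hh_mono hd
    have hset : Set.Ioo (0 : ℝ) 1 = Set.Ioo (0 : ℝ) a ∪ Set.Ico a 1 :=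
      (Set.Ioo_union_Ico_eq_Ioo ha0 ha1.le).symm
    rw [hset, setIntegral_union (by apply Set.disjoint_left.2; rintro x ⟨_, h1⟩ ⟨h2, _⟩; exact absurd h1 (not_lt.2 h2)) measurableSet_Ico
        (hint.mono_set hsub1) (hint.mono_set (Set.Ico_subset_Ioo_left ha0)),
      integral_Ico_eq_integral_Ioo]
  -- the key inequality: for 0 ≤ d₁ < d₂, A d₁ * B d₂ < A d₂ * B d₁
  have key : ∀ d₁ d₂, 0 ≤ d₁ → d₁ < d₂ → A d₁ * B d₂ < A d₂ * B d₁ := by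
    intro d₁ d₂ hd₁ hdd
    have hd₂ : 0 ≤ d₂ := hd₁.trans hdd.le
    set δ : ℝ := d₂ - d₁ with hδ
    have hδpos : 0 < δ := by simp [hδ]; linarith
    set c : ℝ := Real.exp (-δ * h a) with hc
    have hcpos : 0 < c := Real.exp_pos _
    have haa : a ∈ Set.Ioo (0:ℝ) 1 := ⟨ha0, ha1⟩
    -- A d₂ > c * A d₁
    have hA2 : c * A d₁ < A d₂ := by
      have hint₁ : IntegrableOn (fun x => g x * Real.exp (-d₁ * h x)) (Set.Ioo (0:ℝ) a) :=
        (gd_int hg_pos hg_int hh_pos hh_mono hd₁).mono_set hsub1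
      have hint₂ : IntegrableOn (fun x => g x * Real.exp (-d₂ * h x)) (Set.Ioo (0:ℝ) a) :=
        (gd_int hg_pos hg_int hh_pos hh_mono hd₂).mono_set hsub1
      have hdiff : 0 < ∫ x in Set.Ioo (0:ℝ) a,
          (g x * Real.exp (-d₂ * h x) - c * (g x * Real.exp (-d₁ * h x))) := by
        have hptw : ∀ x ∈ Set.Ioo (0:ℝ) a,
            0 < g x * Real.exp (-d₂ * h x) - c * (g x * Real.exp (-d₁ * h x)) := by
          intro x hx
          have hx1 := hsub1 hx
          have hgx := hg_pos x hx1
          have hlt : h x < h a := hh_mono hx1 haa hx.2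
          have he : c < Real.exp (-δ * h x) := by
            rw [hc, Real.exp_lt_exp]
            nlinarith
          have hsplit : Real.exp (-d₂ * h x)
              = Real.exp (-d₁ * h x) * Real.exp (-δ * h x) := by
            rw [← Real.exp_add, hδ]; ring_nf
          rw [hsplit]
          have := Real.exp_pos (-d₁ * h x)
          nlinarith [mul_pos (mul_pos hgx this) (sub_pos.2 he)]
        have hintd : IntegrableOn (fun x =>
            g x * Real.exp (-d₂ * h x) - c * (g x * Real.exp (-d₁ * h x))) (Set.Ioo (0:ℝ) a) :=
          hint₂.sub (hint₁.const_mul c)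
        have hnn : 0 ≤ᵐ[volume.restrict (Set.Ioo (0:ℝ) a)] fun x =>
            g x * Real.exp (-d₂ * h x) - c * (g x * Real.exp (-d₁ * h x)) :=
          (ae_restrict_iff' measurableSet_Ioo).2
            (Filter.Eventually.of_forall fun x hx => (hptw x hx).le)
        rw [setIntegral_pos_iff_support_of_nonneg_ae hnn hintd]
        refine lt_of_lt_of_le ?_ (measure_mono (fun x hx =>
          ⟨by simpa [Function.mem_support] using (hptw x hx).ne', hx⟩))
        simp [ha0]
      rw [integral_sub hint₂ (hint₁.const_mul c), integral_const_mul] at hdiff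
      linarith
    -- B d₂ < c * B d₁
    have hB2 : B d₂ < c * B d₁ := by
      have hint₁ : IntegrableOn (fun x => g x * Real.exp (-d₁ * h x)) (Set.Ioo a (1:ℝ)) :=
        (gd_int hg_pos hg_int hh_pos hh_mono hd₁).mono_set hsub2
      have hint₂ : IntegrableOn (fun x => g x * Real.exp (-d₂ * h x)) (Set.Ioo a (1:ℝ)) :=
        (gd_int hg_pos hg_int hh_pos hh_mono hd₂).mono_set hsub2
      have hdiff : 0 < ∫ x in Set.Ioo a (1:ℝ),
          (c * (g x * Real.exp (-d₁ * h x)) - g x * Real.exp (-d₂ * h x)) := by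
        have hptw : ∀ x ∈ Set.Ioo a (1:ℝ),
            0 < c * (g x * Real.exp (-d₁ * h x)) - g x * Real.exp (-d₂ * h x) := by
          intro x hx
          have hx1 := hsub2 hx
          have hgx := hg_pos x hx1
          have hlt : h a < h x := hh_mono haa hx1 hx.1
          have he : Real.exp (-δ * h x) < c := by
            rw [hc, Real.exp_lt_exp]
            nlinarith
          have hsplit : Real.exp (-d₂ * h x)
              = Real.exp (-d₁ * h x) * Real.exp (-δ * h x) := by
            rw [← Real.exp_add, hδ]; ring_nf
          rw [hsplit]
          have := Real.exp_pos (-d₁ * h x)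
          nlinarith [mul_pos (mul_pos hgx this) (sub_pos.2 he)]
        have hintd : IntegrableOn (fun x =>
            c * (g x * Real.exp (-d₁ * h x)) - g x * Real.exp (-d₂ * h x)) (Set.Ioo a (1:ℝ)) :=
          (hint₁.const_mul c).sub hint₂
        have hnn : 0 ≤ᵐ[volume.restrict (Set.Ioo a (1:ℝ))] fun x =>
            c * (g x * Real.exp (-d₁ * h x)) - g x * Real.exp (-d₂ * h x) :=
          (ae_restrict_iff' measurableSet_Ioo).2
            (Filter.Eventually.of_forall fun x hx => (hptw x hx).le)
        rw [setIntegral_pos_iff_support_of_nonneg_ae hnn hintd]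
        refine lt_of_lt_of_le ?_ (measure_mono (fun x hx =>
          ⟨by simpa [Function.mem_support] using (hptw x hx).ne', hx⟩))
        simp [ha1]
      rw [integral_sub (hint₁.const_mul c) hint₂, integral_const_mul] at hdiff
      linarith
    have hA1 := hApos d₁ hd₁
    have hB1 := hBpos d₁ hd₁
    nlinarith
  have hmono : StrictMonoOn (fun d => F d a) (Set.Ici (0 : ℝ)) := by
    intro d₁ hd₁ d₂ hd₂ hdd
    simp only [Set.mem_Ici] at hd₁ hd₂
    have hk := key d₁ d₂ hd₁ hdd
    simp only [hF, hsplit d₁ hd₁, hsplit d₂ (hd₁.trans hdd.le)]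
    rw [div_lt_div_iff₀ (by linarith [hApos d₁ hd₁, hBpos d₁ hd₁])
      (by linarith [hApos d₂ (hd₁.trans hdd.le), hBpos d₂ (hd₁.trans hdd.le)])]
    nlinarith [hApos d₁ hd₁, hApos d₂ (hd₁.trans hdd.le)]
  exact ⟨hmono, fun d hd => hmono (Set.self_mem_Ici) (le_of_lt hd) hd⟩
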